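/- For any code C ⊆ F_{q^m}^N (linear or nonlinear) with sum-rank length partition N = r_1 + ... + r_g, the minimum sum-rank distance of C equals the minimum, over all block-diagonal matrices A = diag(A_1,...,A_g) with each A_i an invertible r_i × r_i matrix over F_q, of the minimum Hamming distance of the code C·A. -/

import Mathlib

/-- Sum-rank weight of a block vector over `Fq`: sum over the blocks of the
`Fq`-rank of the block (i.e. the `Fq`-dimension of the span of its entries). -/
noncomputable def srWeight (Fq : Type*) [Field Fq] {F : Type*} [Field F] [Algebra Fq F]
    {g : ℕ} {r : Fin g → ℕ} (c : ∀ i : Fin g, Fin (r i) → F) : ℕ :=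
  ∑ i, Module.finrank Fq (Submodule.span Fq (Set.range (c i)))

/-- Minimum sum-rank distance of a (possibly nonlinear) code. -/
noncomputable def srMinDist (Fq : Type*) [Field Fq] {F : Type*} [Field F] [Algebra Fq F]
    {g : ℕ} {r : Fin g → ℕ} (C : Set (∀ i : Fin g, Fin (r i) → F)) : ℕ :=
  sInf {w | ∃ c ∈ C, ∃ d ∈ C, c ≠ d ∧ w = srWeight Fq (c - d)}

/-- Hamming weight of a block vector. -/
noncomputable def hamWeight {F : Type*} [Field F] [DecidableEq F]
    {g : ℕ} {r : Fin g → ℕ} (c : ∀ i : Fin g, Fin (r i) → F) : ℕ :=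
  ∑ i, (Finset.univ.filter fun j => c i j ≠ 0).card

/-- Minimum Hamming distance of a (possibly nonlinear) code. -/
noncomputable def hamMinDist {F : Type*} [Field F] [DecidableEq F]
    {g : ℕ} {r : Fin g → ℕ} (C : Set (∀ i : Fin g, Fin (r i) → F)) : ℕ :=
  sInf {w | ∃ c ∈ C, ∃ d ∈ C, c ≠ d ∧ w = hamWeight (c - d)}

/-- Blockwise multiplication of a block vector by a block-diagonal matrix
`diag(A_1, …, A_g)` with entries in the subfield `Fq`. -/
noncomputable def blockMul {Fq F : Type*} [Field Fq] [Field F] [Algebra Fq F]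
    {g : ℕ} {r n : Fin g → ℕ} (c : ∀ i : Fin g, Fin (r i) → F)
    (A : ∀ i : Fin g, Matrix (Fin (r i)) (Fin (n i)) Fq) :
    ∀ i : Fin g, Fin (n i) → F :=
  fun i j => ∑ t, c i t * algebraMap Fq F (A i t j)
section SRAux

open Matrix Finset Submodule Module

variable {Fq F : Type*} [Field Fq] [Field F] [Algebra Fq F]

lemma blockMul_apply_eq_vecMul {g : ℕ} {r n : Fin g → ℕ} (c : ∀ i : Fin g, Fin (r i) → F)
    (A : ∀ i : Fin g, Matrix (Fin (r i)) (Fin (n i)) Fq) (i : Fin g) :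
    blockMul c A i = Matrix.vecMul (c i) ((A i).map (algebraMap Fq F)) := by
  funext j
  simp [blockMul, Matrix.vecMul, dotProduct, Matrix.map_apply]

lemma blockMul_sub {g : ℕ} {r n : Fin g → ℕ} (c d : ∀ i : Fin g, Fin (r i) → F)
    (A : ∀ i : Fin g, Matrix (Fin (r i)) (Fin (n i)) Fq) :
    blockMul (c - d) A = blockMul c A - blockMul d A := by
  funext i j
  simp [blockMul, sub_mul, Finset.sum_sub_distrib]

lemma blockMul_blockMul {g : ℕ} {r n s : Fin g → ℕ} (c : ∀ i : Fin g, Fin (r i) → F)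
    (A : ∀ i : Fin g, Matrix (Fin (r i)) (Fin (n i)) Fq)
    (B : ∀ i : Fin g, Matrix (Fin (n i)) (Fin (s i)) Fq) :
    blockMul (blockMul c A) B = blockMul c (fun i => A i * B i) := by
  funext i
  rw [blockMul_apply_eq_vecMul, blockMul_apply_eq_vecMul, blockMul_apply_eq_vecMul,
    Matrix.vecMul_vecMul, Matrix.map_mul]

lemma blockMul_one {g : ℕ} {r : Fin g → ℕ} (c : ∀ i : Fin g, Fin (r i) → F) :
    blockMul c (fun i => (1 : Matrix (Fin (r i)) (Fin (r i)) Fq)) = c := by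
  funext i
  rw [blockMul_apply_eq_vecMul]
  simp

lemma blockMul_leftInverse {g : ℕ} {r : Fin g → ℕ}
    (A : ∀ i : Fin g, Matrix (Fin (r i)) (Fin (r i)) Fq) (hA : ∀ i, IsUnit (A i))
    (c : ∀ i : Fin g, Fin (r i) → F) :
    blockMul (blockMul c A) (fun i => (A i)⁻¹) = c := by
  rw [blockMul_blockMul]
  have h : (fun i => A i * (A i)⁻¹) = fun i => (1 : Matrix (Fin (r i)) (Fin (r i)) Fq) := by
    funext i
    exact Matrix.mul_nonsing_inv _ ((Matrix.isUnit_iff_isUnit_det _).mp (hA i))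
  rw [h, blockMul_one]

lemma blockMul_injective {g : ℕ} {r : Fin g → ℕ}
    (A : ∀ i : Fin g, Matrix (Fin (r i)) (Fin (r i)) Fq) (hA : ∀ i, IsUnit (A i)) :
    Function.Injective (fun c : ∀ i : Fin g, Fin (r i) → F => blockMul c A) := by
  intro c d h
  have := congrArg (fun x => blockMul x (fun i => (A i)⁻¹)) h
  simpa [blockMul_leftInverse A hA] using this

lemma span_vecMul_le {a b : ℕ} (v : Fin a → F) (A : Matrix (Fin a) (Fin b) Fq) :
    span Fq (Set.range (Matrix.vecMul v (A.map (algebraMap Fq F)))) ≤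
      span Fq (Set.range v) := by
  rw [span_le]
  rintro _ ⟨j, rfl⟩
  have h : Matrix.vecMul v (A.map (algebraMap Fq F)) j = ∑ t, A t j • v t := by
    simp [Matrix.vecMul, dotProduct, Matrix.map_apply, Algebra.smul_def, mul_comm]
  rw [h]
  exact Submodule.sum_mem _ fun t _ => Submodule.smul_mem _ _ (subset_span ⟨t, rfl⟩)

lemma span_blockMul_eq {g : ℕ} {r : Fin g → ℕ} (c : ∀ i : Fin g, Fin (r i) → F)
    (A : ∀ i : Fin g, Matrix (Fin (r i)) (Fin (r i)) Fq) (hA : ∀ i, IsUnit (A i)) (i : Fin g) :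
    span Fq (Set.range (blockMul c A i)) = span Fq (Set.range (c i)) := by
  apply le_antisymm
  · rw [blockMul_apply_eq_vecMul]
    exact span_vecMul_le _ _
  · have hc : c i = Matrix.vecMul (blockMul c A i) (((A i)⁻¹).map (algebraMap Fq F)) := by
      conv_lhs => rw [← blockMul_leftInverse A hA c]
      rw [blockMul_apply_eq_vecMul]
    rw [hc]
    exact span_vecMul_le _ _

lemma srWeight_blockMul {g : ℕ} {r : Fin g → ℕ} (c : ∀ i : Fin g, Fin (r i) → F)
    (A : ∀ i : Fin g, Matrix (Fin (r i)) (Fin (r i)) Fq) (hA : ∀ i, IsUnit (A i)) :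
    srWeight Fq (blockMul c A) = srWeight Fq c := by
  unfold srWeight
  exact Finset.sum_congr rfl fun i _ => by rw [span_blockMul_eq c A hA i]

lemma finrank_span_le_filter_card [DecidableEq F] {n : ℕ} (v : Fin n → F) :
    finrank Fq (span Fq (Set.range v)) ≤ (Finset.univ.filter fun j => v j ≠ 0).card := by
  classical
  set s : Finset F := (Finset.univ.filter fun j => v j ≠ 0).image v with hs
  have h1 : span Fq (Set.range v) = span Fq (s : Set F) := by
    apply le_antisymm
    · rw [span_le]
      rintro _ ⟨j, rfl⟩
      by_cases h : v j = 0
      · rw [h]; exact Submodule.zero_mem _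
      · exact subset_span (by simp only [hs, Finset.coe_image, Set.mem_image,
          Finset.mem_coe, Finset.mem_filter, Finset.mem_univ, true_and]; exact ⟨j, h, rfl⟩)
    · rw [span_le]
      intro x hx
      simp only [hs, Finset.coe_image, Set.mem_image, Finset.mem_coe, Finset.mem_filter] at hx
      obtain ⟨j, -, rfl⟩ := hx
      exact subset_span ⟨j, rfl⟩
  rw [h1]
  calc finrank Fq (span Fq (s : Set F)) ≤ s.card := finrank_span_finset_le_card s
    _ ≤ _ := Finset.card_image_le

lemma srWeight_le_hamWeight [DecidableEq F] {g : ℕ} {r : Fin g → ℕ}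
    (c : ∀ i : Fin g, Fin (r i) → F) : srWeight Fq c ≤ hamWeight c :=
  Finset.sum_le_sum fun i _ => finrank_span_le_filter_card (c i)

/-- For a single block, there is an invertible matrix making the Hamming weight
of the transformed vector at most the rank. -/
lemma exists_unit_matrix [DecidableEq F] {n : ℕ} (v : Fin n → F) :
    ∃ A : Matrix (Fin n) (Fin n) Fq, IsUnit A ∧
      (Finset.univ.filter fun j =>
          Matrix.vecMul v (A.map (algebraMap Fq F)) j ≠ 0).card ≤
        finrank Fq (span Fq (Set.range v)) := by
  classical
  set φ : (Fin n → Fq) →ₗ[Fq] F := Fintype.linearCombination Fq v with hφ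
  have hrange : LinearMap.range φ = span Fq (Set.range v) := Fintype.range_linearCombination Fq v
  set K := LinearMap.ker φ with hK
  obtain ⟨W, hW⟩ := Submodule.exists_isCompl K
  have hdim : finrank Fq W + finrank Fq K = n := by
    have h1 := Submodule.finrank_add_eq_of_isCompl hW.symm
    simpa [Module.finrank_fin_fun] using h1
  have hrk : finrank Fq W = finrank Fq (span Fq (Set.range v)) := by
    have h2 := LinearMap.finrank_range_add_finrank_ker φ
    rw [hrange, Module.finrank_fin_fun, ← hK] at h2
    omega
  -- basis of Fq^n adapted to the decomposition W ⊕ K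
  let bW := Module.finBasis Fq W
  let bK := Module.finBasis Fq K
  let b0 : Basis (Fin (finrank Fq W) ⊕ Fin (finrank Fq K)) Fq (W × K) := bW.prod bK
  let e : (W × K) ≃ₗ[Fq] (Fin n → Fq) := Submodule.prodEquivOfIsCompl W K hW.symm
  let b1 : Basis (Fin (finrank Fq W) ⊕ Fin (finrank Fq K)) Fq (Fin n → Fq) := b0.map e
  let σ : (Fin (finrank Fq W) ⊕ Fin (finrank Fq K)) ≃ Fin n :=
    finSumFinEquiv.trans (finCongr hdim)
  let b : Basis (Fin n) Fq (Fin n → Fq) := b1.reindex σ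
  set A : Matrix (Fin n) (Fin n) Fq := (Pi.basisFun Fq (Fin n)).toMatrix b with hA
  have hAunit : IsUnit A := by
    have := Basis.invertibleToMatrix (Pi.basisFun Fq (Fin n)) b
    exact isUnit_of_invertible A
  have hAentry : ∀ t j, A t j = b j t := by
    intro t j
    rw [hA, Basis.toMatrix_apply, Pi.basisFun_repr]
  have hw : ∀ j, Matrix.vecMul v (A.map (algebraMap Fq F)) j = φ (b j) := by
    intro j
    simp only [hφ, Fintype.linearCombination_apply, Matrix.vecMul, dotProduct,
      Matrix.map_apply, Algebra.smul_def]
    exact Finset.sum_congr rfl fun t _ => by rw [hAentry t j, mul_comm]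
  refine ⟨A, hAunit, ?_⟩
  rw [← hrk]
  -- nonzero coordinates lie in the image of the `W`-indices
  have hsub : (Finset.univ.filter fun j =>
      Matrix.vecMul v (A.map (algebraMap Fq F)) j ≠ 0) ⊆
      Finset.univ.image (fun jw => σ (Sum.inl jw)) := by
    intro j hj
    rw [Finset.mem_filter] at hj
    obtain ⟨jw, hjw⟩ : ∃ jw, σ (Sum.inl jw) = j := by
      obtain ⟨s, hs⟩ := σ.surjective j
      cases s with
      | inl jw => exact ⟨jw, hs⟩
      | inr jk =>
        exfalso
        apply hj.2
        rw [hw j, ← hs]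
        have hb : b (σ (Sum.inr jk)) = (bK jk : Fin n → Fq) := by
          simp only [b, Module.Basis.reindex_apply, Equiv.symm_apply_apply, b1, Basis.map_apply,
            b0, Basis.prod_apply]
          simp [e, Submodule.coe_prodEquivOfIsCompl']
        rw [hb]
        exact (LinearMap.mem_ker).mp (bK jk).2
    exact Finset.mem_image.mpr ⟨jw, Finset.mem_univ _, hjw⟩
  calc _ ≤ (Finset.univ.image (fun jw => σ (Sum.inl jw))).card := Finset.card_le_card hsub
    _ ≤ (Finset.univ : Finset (Fin (finrank Fq W))).card := Finset.card_image_le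
    _ = finrank Fq W := by simp

end SRAux
/-- the minimum sum-rank distance of a code `C ⊆ F_{q^m}^N` equals the
minimum, over all invertible block-diagonal matrices over `F_q`, of the minimum
Hamming distance of `C·A`. -/

theorem sum_rank_distance_eq_min_hamming_distances
    {Fq F : Type*} [Field Fq] [Fintype Fq] [Field F] [Fintype F] [Algebra Fq F]
    [DecidableEq F] {g : ℕ} {r : Fin g → ℕ}
    (C : Set (∀ i : Fin g, Fin (r i) → F)) (hC : C.Nontrivial) :
    srMinDist Fq C =
      sInf {w | ∃ A : ∀ i : Fin g, Matrix (Fin (r i)) (Fin (r i)) Fq,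
        (∀ i, IsUnit (A i)) ∧ w = hamMinDist ((fun c => blockMul c A) '' C)} := by
  classical
  apply le_antisymm
  · apply le_csInf
    · exact ⟨_, fun _ => 1, fun i => isUnit_one, rfl⟩
    · rintro w ⟨A, hA, rfl⟩
      have himg : ((fun c => blockMul c A) '' C).Nontrivial := by
        obtain ⟨x, hx, y, hy, hxy⟩ := hC
        exact ⟨blockMul x A, ⟨x, hx, rfl⟩, blockMul y A, ⟨y, hy, rfl⟩,
          fun h => hxy (blockMul_injective A hA h)⟩
      have hne : {w | ∃ c' ∈ (fun c => blockMul c A) '' C, ∃ d' ∈ (fun c => blockMul c A) '' C,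
          c' ≠ d' ∧ w = hamWeight (c' - d')}.Nonempty := by
        obtain ⟨x, hx, y, hy, hxy⟩ := himg
        exact ⟨_, x, hx, y, hy, hxy, rfl⟩
      obtain ⟨c', hc', d', hd', hne', heq⟩ := Nat.sInf_mem hne
      obtain ⟨c, hc, rfl⟩ := hc'
      obtain ⟨d, hd, rfl⟩ := hd'
      have hcd : c ≠ d := fun h => hne' (by rw [h])
      rw [hamMinDist, heq]
      calc srMinDist Fq C ≤ srWeight Fq (c - d) := Nat.sInf_le ⟨c, hc, d, hd, hcd, rfl⟩
        _ = srWeight Fq (blockMul (c - d) A) := (srWeight_blockMul _ A hA).symm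
        _ ≤ hamWeight (blockMul (c - d) A) := srWeight_le_hamWeight _
        _ = hamWeight (blockMul c A - blockMul d A) := by rw [blockMul_sub]
  · have hSne : {w | ∃ c ∈ C, ∃ d ∈ C, c ≠ d ∧ w = srWeight Fq (c - d)}.Nonempty := by
      obtain ⟨c, hc, d, hd, hcd⟩ := hC
      exact ⟨_, c, hc, d, hd, hcd, rfl⟩
    obtain ⟨c, hc, d, hd, hcd, heq⟩ := Nat.sInf_mem hSne
    choose A hA hw using fun i => exists_unit_matrix (Fq := Fq) ((c - d) i)
    refine le_trans (Nat.sInf_le ⟨A, hA, rfl⟩) ?_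
    have himgmem : hamWeight (blockMul c A - blockMul d A) ∈
        {w | ∃ c' ∈ (fun x => blockMul x A) '' C, ∃ d' ∈ (fun x => blockMul x A) '' C,
          c' ≠ d' ∧ w = hamWeight (c' - d')} :=
      ⟨blockMul c A, ⟨c, hc, rfl⟩, blockMul d A, ⟨d, hd, rfl⟩,
        fun h => hcd (blockMul_injective A hA h), rfl⟩
    refine le_trans (Nat.sInf_le himgmem) ?_
    rw [srMinDist, heq, ← blockMul_sub]
    unfold hamWeight srWeight
    refine Finset.sum_le_sum fun i _ => ?_
    rw [blockMul_apply_eq_vecMul]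
    exact hw i
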